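/- For 0 < r < n, the following Schur polynomial identity holds: Σ_{i=0}^{r} (-1)^i C(n,i) s_h(1^{r-i}) = C(n-2, r-1), where h = (n-r, 1^{r-1}) is the hook partition and s_h(1^{m}) denotes the Schur polynomial of shape h evaluated at m variables all equal to 1 (with s_h(1^m) = 0 if m < r). -/
import Mathlib


/-- The cells of the Young diagram of the hook partition `h = (n-r, 1^{r-1})`:
a first row of length `n - r` and a first column of length `r` (cells are `(row, col)`,
`0`-indexed). -/
def hookCells (n r : ℕ) : Set (ℕ × ℕ) :=
  {c | (c.1 = 0 ∧ c.2 < n - r) ∨ (c.2 = 0 ∧ c.1 < r)}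

/-- `s_h(1^m)` for the hook `h = (n-r, 1^{r-1})`: the number of semistandard Young tableaux
of shape `h` with entries in `{1, …, m}` (weakly increasing along rows, strictly increasing
down columns).  This is `0` when `m < r`. -/
noncomputable def ssytHookCount (n r m : ℕ) : ℕ :=
  Set.ncard {T : ℕ × ℕ → ℕ |
    (∀ p ∈ hookCells n r, T p ∈ Set.Icc 1 m) ∧
    (∀ p, p ∉ hookCells n r → T p = 0) ∧
    (∀ i j, (i, j + 1) ∈ hookCells n r → T (i, j) ≤ T (i, j + 1)) ∧
    (∀ i j, (i + 1, j) ∈ hookCells n r → T (i, j) < T (i + 1, j))}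

namespace HookAux

/-- aux: an eventually-strict chain grows at least linearly. -/
lemma aux_strict (f : ℕ → ℕ) (c : ℕ) (h : ∀ j, j + 1 < c → f j < f (j + 1)) :
    ∀ i j, i ≤ j → j < c → f i + (j - i) ≤ f j := by
  intro i j
  induction j with
  | zero =>
    intro h1 _
    obtain rfl := Nat.le_zero.mp h1
    simp
  | succ j ih =>
    intro h1 h2
    rcases Nat.eq_or_lt_of_le h1 with h3 | h3
    · subst h3; simp
    · have := ih (by omega) (by omega)
      have := h j h2
      omega

/-- aux: a weakly increasing chain is monotone. -/
lemma aux_weak (f : ℕ → ℕ) (c : ℕ) (h : ∀ j, j + 1 < c → f j ≤ f (j + 1)) :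
    ∀ i j, i ≤ j → j < c → f i ≤ f j := by
  intro i j
  induction j with
  | zero =>
    intro h1 _
    obtain rfl := Nat.le_zero.mp h1
    exact le_rfl
  | succ j ih =>
    intro h1 h2
    rcases Nat.eq_or_lt_of_le h1 with h3 | h3
    · subst h3; exact le_rfl
    · have := ih (by omega) (by omega)
      have := h j h2
      omega

variable {n r m : ℕ}

def tabSet (n r m : ℕ) : Set (ℕ × ℕ → ℕ) :=
  {T : ℕ × ℕ → ℕ |
    (∀ p ∈ hookCells n r, T p ∈ Set.Icc 1 m) ∧
    (∀ p, p ∉ hookCells n r → T p = 0) ∧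
    (∀ i j, (i, j + 1) ∈ hookCells n r → T (i, j) ≤ T (i, j + 1)) ∧
    (∀ i j, (i + 1, j) ∈ hookCells n r → T (i, j) < T (i + 1, j))}

lemma ssytHookCount_eq : ssytHookCount n r m = (tabSet n r m).ncard := rfl

lemma col_lower {T : ℕ × ℕ → ℕ} (hT : T ∈ tabSet n r m) :
    ∀ i, i < r → i + 1 ≤ T (i, 0) := by
  obtain ⟨h1, _, _, h4⟩ := hT
  intro i hi
  induction i with
  | zero =>
    have := h1 (0, 0) (Or.inr ⟨rfl, hi⟩)
    exact this.1
  | succ i ih =>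
    have hmem : ((i + 1 : ℕ), (0 : ℕ)) ∈ hookCells n r := Or.inr ⟨rfl, hi⟩
    have := h4 i 0 hmem
    have := ih (by omega)
    omega

lemma col_upper {T : ℕ × ℕ → ℕ} (hT : T ∈ tabSet n r m) (hr : 0 < r) :
    ∀ d, d ≤ r - 1 → T (r - 1 - d, 0) + d ≤ m := by
  obtain ⟨h1, _, _, h4⟩ := hT
  intro d hd
  induction d with
  | zero =>
    have := h1 (r - 1, 0) (Or.inr ⟨rfl, by omega⟩)
    simpa using this.2
  | succ d ih =>
    have h1d : r - 1 - d < r := by omega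
    have hmem : ((r - 1 - d : ℕ), (0 : ℕ)) ∈ hookCells n r := Or.inr ⟨rfl, h1d⟩
    have heq : r - 1 - d = (r - 1 - (d + 1)) + 1 := by omega
    have hstep := h4 (r - 1 - (d + 1)) 0 (by rw [← heq]; exact hmem)
    rw [← heq] at hstep
    have := ih (by omega)
    omega

lemma count_zero (hr : 0 < r) (hm : m < r) : ssytHookCount n r m = 0 := by
  rw [ssytHookCount_eq]
  have hemp : tabSet n r m = ∅ := by
    rw [Set.eq_empty_iff_forall_notMem]
    intro T hT
    have h1 := col_lower hT (r - 1) (by omega)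
    have h2 := col_upper hT hr 0 (by omega)
    simp only [Nat.sub_zero, Nat.add_zero] at h2
    omega
  rw [hemp, Set.ncard_empty]

lemma col_forced {T : ℕ × ℕ → ℕ} (hT : T ∈ tabSet n r r) (hr : 0 < r) :
    ∀ i, i < r → T (i, 0) = i + 1 := by
  intro i hi
  have h1 := col_lower hT i hi
  have h2 := col_upper hT hr (r - 1 - i) (by omega)
  have : r - 1 - (r - 1 - i) = i := by omega
  rw [this] at h2
  omega

lemma row_mono {T : ℕ × ℕ → ℕ} (hT : T ∈ tabSet n r m) :
    ∀ i j, i ≤ j → j < n - r → T (0, i) ≤ T (0, j) := by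
  intro i j hij hj
  refine aux_weak (fun j => T (0, j)) (n - r) ?_ i j hij hj
  intro j hjc
  exact hT.2.2.1 0 j (Or.inl ⟨rfl, hjc⟩)

/-- The candidate tableau built from a row-entry function `E`. -/
def mkT (n r : ℕ) (E : ℕ → ℕ) : ℕ × ℕ → ℕ := fun p =>
  if p.2 = 0 ∧ p.1 < r then p.1 + 1
  else if p.1 = 0 ∧ 0 < p.2 ∧ p.2 < n - r then E (p.2 - 1) - (p.2 - 1)
  else 0

lemma mkT_col (E : ℕ → ℕ) {i : ℕ} (hi : i < r) : mkT n r E (i, 0) = i + 1 := by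
  unfold mkT
  exact if_pos ⟨rfl, hi⟩

lemma mkT_row (E : ℕ → ℕ) {j : ℕ} (h1 : 0 < j) (h2 : j < n - r) :
    mkT n r E (0, j) = E (j - 1) - (j - 1) := by
  unfold mkT
  rw [if_neg (fun h => by omega), if_pos ⟨rfl, h1, h2⟩]

lemma mkT_off (E : ℕ → ℕ) {p : ℕ × ℕ} (hp : p ∉ hookCells n r) : mkT n r E p = 0 := by
  simp only [hookCells, Set.mem_setOf_eq, not_or, not_and] at hp
  unfold mkT
  rw [if_neg (fun h => (hp.2 h.1) h.2), if_neg (fun h => by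
    have := hp.1 h.1
    omega)]

/-- The map sending a tableau to the set of shifted row entries. -/
noncomputable def φ (T : ℕ × ℕ → ℕ) : Finset ℕ :=
  (Finset.range (n - r - 1)).image (fun j => T (0, j + 1) + j)

lemma g_strict {T : ℕ × ℕ → ℕ} (hT : T ∈ tabSet n r m) (hrn : r < n) {a b : ℕ}
    (ha : a < b) (hb : b < n - r - 1) : T (0, a + 1) + a < T (0, b + 1) + b := by
  have := row_mono hT (a + 1) (b + 1) (by omega) (by omega)
  omega

lemma phi_card {T : ℕ × ℕ → ℕ} (hT : T ∈ tabSet n r m) (hrn : r < n) :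
    (φ (n := n) (r := r) T).card = n - r - 1 := by
  rw [φ, Finset.card_image_of_injOn, Finset.card_range]
  intro a ha b hb hab
  simp only [Finset.mem_coe, Finset.mem_range] at ha hb
  by_contra hne
  rcases Nat.lt_or_ge a b with h | h
  · exact absurd hab (Nat.ne_of_lt (g_strict hT hrn h hb))
  · have : b < a := by omega
    exact absurd hab.symm (Nat.ne_of_lt (g_strict hT hrn this ha))

lemma phi_injOn (hr : 0 < r) (hrn : r < n) :
    Set.InjOn (φ (n := n) (r := r)) (tabSet n r r) := by
  intro T hT T' hT' hphi
  set k := n - r - 1 with hk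
  have hcard : (φ (n := n) (r := r) T).card = k := phi_card hT hrn
  -- both strict mono enumerations agree with orderEmbOfFin
  have key : ∀ j : Fin k, T (0, j.1 + 1) + j.1 = T' (0, j.1 + 1) + j.1 := by
    have hu1 := Finset.orderEmbOfFin_unique (α := ℕ) hcard
      (f := fun j : Fin k => T (0, j.1 + 1) + j.1)
      (fun x => Finset.mem_image.2 ⟨x.1, Finset.mem_range.2 x.2, rfl⟩)
      (fun a b hab => g_strict hT hrn hab b.2)
    have hcard' : (φ (n := n) (r := r) T').card = k := phi_card hT' hrn
    have hu2 := Finset.orderEmbOfFin_unique (α := ℕ) hcard'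
      (f := fun j : Fin k => T' (0, j.1 + 1) + j.1)
      (fun x => Finset.mem_image.2 ⟨x.1, Finset.mem_range.2 x.2, rfl⟩)
      (fun a b hab => g_strict hT' hrn hab b.2)
    have hcong : (φ (n := n) (r := r) T).orderEmbOfFin hcard =
        (φ (n := n) (r := r) T').orderEmbOfFin hcard' := by
      apply Finset.orderEmbOfFin_unique' hcard'
      intro x
      rw [← hphi]
      exact Finset.orderEmbOfFin_mem _ _ _
    intro j
    have e1 := congrFun hu1 j
    have e2 := congrFun hu2 j
    rw [e1, e2, hcong]
  funext p
  obtain ⟨i, j⟩ := p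
  by_cases hp : (i, j) ∈ hookCells n r
  · rcases Nat.eq_zero_or_pos j with hj | hj
    · subst hj
      have hi : i < r := by
        rcases hp with ⟨h1, _⟩ | ⟨_, h2⟩
        · simp at h1; omega
        · exact h2
      rw [col_forced hT hr i hi, col_forced hT' hr i hi]
    · have hi : i = 0 ∧ j < n - r := by
        rcases hp with ⟨h1, h2⟩ | ⟨h1, _⟩
        · exact ⟨h1, h2⟩
        · simp at h1; omega
      obtain ⟨rfl, hj2⟩ := hi
      have hjk : j - 1 < k := by omega
      have := key ⟨j - 1, hjk⟩
      simp only at this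
      have hj1 : j - 1 + 1 = j := by omega
      rw [hj1] at this
      omega
  · rw [hT.2.1 _ hp, hT'.2.1 _ hp]

lemma phi_image (hr : 0 < r) (hrn : r < n) :
    φ (n := n) (r := r) '' (tabSet n r r) =
      ↑(Finset.powersetCard (n - r - 1) (Finset.Icc 1 (n - 2))) := by
  set k := n - r - 1 with hk
  ext s
  simp only [Set.mem_image, Finset.mem_coe, Finset.mem_powersetCard]
  constructor
  · rintro ⟨T, hT, rfl⟩
    constructor
    · intro a ha
      rw [φ] at ha
      obtain ⟨j, hj, rfl⟩ := Finset.mem_image.1 ha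
      rw [Finset.mem_range] at hj
      have hmem := hT.1 (0, j + 1) (Or.inl ⟨rfl, by omega⟩)
      obtain ⟨hlo, hhi⟩ := hmem
      exact Finset.mem_Icc.2 ⟨by omega, by omega⟩
    · exact phi_card hT hrn
  · rintro ⟨hs, hcard⟩
    have hs' : ∀ a ∈ s, 1 ≤ a ∧ a ≤ n - 2 := by
      intro a ha
      exact Finset.mem_Icc.1 (hs ha)
    set e := s.orderEmbOfFin hcard with he
    set E : ℕ → ℕ := fun j => if h : j < k then e ⟨j, h⟩ else 0 with hE
    have Emem : ∀ j, j < k → E j ∈ s := by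
      intro j hj
      simp only [hE, dif_pos hj]
      exact Finset.orderEmbOfFin_mem s hcard _
    have Emono : ∀ j, j + 1 < k → E j < E (j + 1) := by
      intro j hj
      simp only [hE, dif_pos hj, dif_pos (show j < k by omega)]
      exact e.strictMono (by simp [Fin.lt_def])
    have Elow : ∀ j, j < k → j + 1 ≤ E j := by
      intro j hj
      have h0 := (hs' _ (Emem 0 (by omega))).1
      have := aux_strict E k Emono 0 j (by omega) hj
      omega
    have Ehigh : ∀ j, j < k → E j + (k - 1 - j) ≤ n - 2 := by
      intro j hj
      have := aux_strict E k Emono j (k - 1) (by omega) (by omega)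
      have := (hs' _ (Emem (k - 1) (by omega))).2
      omega
    set T : ℕ × ℕ → ℕ := mkT n r E with hTdef
    have Trow : ∀ j, 0 < j → j < n - r → T (0, j) = E (j - 1) - (j - 1) :=
      fun j h1 h2 => mkT_row E h1 h2
    have Tcol : ∀ i, i < r → T (i, 0) = i + 1 := fun i hi => mkT_col E hi
    refine ⟨T, ⟨?_, ?_, ?_, ?_⟩, ?_⟩
    · -- values in Icc 1 r
      rintro ⟨i, j⟩ hp
      rcases Nat.eq_zero_or_pos j with hj | hj
      · subst hj
        have hi : i < r := by
          rcases hp with ⟨h1, _⟩ | ⟨_, h2⟩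
          · simp at h1; omega
          · exact h2
        rw [Tcol i hi]
        exact ⟨by omega, by omega⟩
      · have hij : i = 0 ∧ j < n - r := by
          rcases hp with ⟨h1, h2⟩ | ⟨h1, _⟩
          · exact ⟨h1, h2⟩
          · simp at h1; omega
        obtain ⟨rfl, hj2⟩ := hij
        rw [Trow j hj hj2]
        have hjk : j - 1 < k := by omega
        have := Elow _ hjk
        have := Ehigh _ hjk
        exact ⟨by omega, by omega⟩
    · -- zero off the hook
      intro p hp
      exact mkT_off E hp
    · -- rows weakly increasing
      intro i j hp
      have hij : i = 0 ∧ j + 1 < n - r := by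
        rcases hp with ⟨h1, h2⟩ | ⟨h1, _⟩
        · exact ⟨h1, h2⟩
        · simp at h1
      obtain ⟨rfl, hj2⟩ := hij
      rcases Nat.eq_zero_or_pos j with hj | hj
      · subst hj
        rw [Tcol 0 hr, Trow 1 (by omega) hj2]
        have := Elow (1 - 1) (by omega)
        omega
      · rw [Trow j hj (by omega), Trow (j + 1) (by omega) hj2]
        have hjk : j - 1 + 1 < k := by omega
        have := Emono (j - 1) hjk
        have := Elow (j - 1) (by omega)
        have hj1 : j + 1 - 1 = j - 1 + 1 := by omega
        rw [hj1]
        omega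
    · -- columns strictly increasing
      intro i j hp
      have hij : j = 0 ∧ i + 1 < r := by
        rcases hp with ⟨h1, _⟩ | ⟨h1, h2⟩
        · simp at h1
        · exact ⟨h1, h2⟩
      obtain ⟨rfl, hi2⟩ := hij
      rw [Tcol i (by omega), Tcol (i + 1) hi2]
      omega
    · -- φ T = s
      rw [φ]
      have himg : ∀ j, j < k → T (0, j + 1) + j = E j := by
        intro j hj
        rw [Trow (j + 1) (by omega) (by omega)]
        simp only [Nat.add_sub_cancel]
        have := Elow j hj
        omega
      ext a
      simp only [Finset.mem_image, Finset.mem_range]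
      constructor
      · rintro ⟨j, hj, rfl⟩
        rw [himg j hj]
        exact Emem j hj
      · intro ha
        have : ∃ i : Fin k, e i = a := by
          have hrange := Finset.range_orderEmbOfFin s hcard
          have : a ∈ Set.range ⇑(s.orderEmbOfFin hcard) := by
            rw [hrange]; exact ha
          exact this
        obtain ⟨i, hi⟩ := this
        refine ⟨i.1, i.2, ?_⟩
        rw [himg i.1 i.2]
        simp only [hE, dif_pos i.2]
        exact hi

lemma count_main (hr : 0 < r) (hrn : r < n) :
    ssytHookCount n r r = Nat.choose (n - 2) (r - 1) := by
  rw [ssytHookCount_eq]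
  have h1 := Set.ncard_image_of_injOn (phi_injOn (n := n) (r := r) hr hrn)
  rw [phi_image hr hrn, Set.ncard_coe_finset, Finset.card_powersetCard,
    Nat.card_Icc] at h1
  rw [← h1]
  have h2 : n - 2 + 1 - 1 = n - 2 := by omega
  rw [h2]
  have h3 : n - r - 1 = (n - 2) - (r - 1) := by omega
  rw [h3, Nat.choose_symm (by omega)]

end HookAux

/-- For `0 < r < n`, the Schur polynomial identity
`Σ_{i=0}^{r} (-1)^i C(n,i) s_h(1^{r-i}) = C(n-2, r-1)`, where `h = (n-r, 1^{r-1})` is the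
hook partition and `s_h(1^m)` is the number of SSYT of shape `h` with entries in `{1,…,m}`. -/
theorem hook_schur_alternating_sum (n r : ℕ) (hr : 0 < r) (hrn : r < n) :
    (∑ i ∈ Finset.range (r + 1),
        (-1 : ℤ) ^ i * (Nat.choose n i : ℤ) * (ssytHookCount n r (r - i) : ℤ)) =
      (Nat.choose (n - 2) (r - 1) : ℤ) := by
  rw [Finset.sum_eq_single_of_mem 0 (Finset.mem_range.2 (by omega))]
  · simp only [pow_zero, Nat.choose_zero_right, Nat.cast_one, one_mul, Nat.sub_zero]
    rw [HookAux.count_main hr hrn]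
  · intro b _ hb
    rw [HookAux.count_zero hr (show r - b < r by omega)]
    simp
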